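/- For the Virasoro algebra Vir with basis {L_n, C : n ∈ ℤ} and brackets [L_m, L_n] = (n−m)L_{m+n} + δ_{m+n,0}·((m³−m)/12)·C, [C, L_m] = 0, and for any nonzero integer n and nonzero complex number a, the linear map φ_n∘τ_a defined by L_i ↦ (a^i/n)(L_{ni} − δ_{i,0}·((n²−1)/24)·C) and C ↦ nC is a Lie algebra endomorphism of Vir. -/

import Mathlib

/-- The defining bracket relations of the Virasoro algebra on a family `L : ℤ → V`
and a central element `C`. -/
def VirRel {V : Type*} [LieRing V] [LieAlgebra ℂ V] (L : ℤ → V) (C : V) : Prop :=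
  (∀ m n : ℤ, ⁅L m, L n⁆ = ((n : ℂ) - (m : ℂ)) • L (m + n)
      + (if m + n = 0 then ((m : ℂ) ^ 3 - (m : ℂ)) / 12 else 0) • C) ∧
  ∀ m : ℤ, ⁅C, L m⁆ = 0

/-- `f` has the values of `φ_n ∘ τ_a` on the basis:
`f(L_i) = (a^i/n)(L_{ni} - δ_{i,0}((n²-1)/24)C)` and `f(C) = nC`. -/
def PhiTau {V : Type*} [LieRing V] [LieAlgebra ℂ V] (L : ℤ → V) (C : V)
    (n : ℤ) (a : ℂ) (f : V →ₗ[ℂ] V) : Prop :=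
  (∀ i : ℤ, f (L i) = (a ^ i / (n : ℂ)) •
      (L (n * i) - (if i = 0 then ((n : ℂ) ^ 2 - 1) / 24 else 0) • C)) ∧
  f C = (n : ℂ) • C

/-- the linear map `φ_n ∘ τ_a` is a Lie algebra endomorphism of the
Virasoro algebra, for `n ∈ ℤ*`, `a ∈ ℂ*`. -/
theorem stmt_3 {V : Type*} [LieRing V] [LieAlgebra ℂ V]
    (L : ℤ → V) (C : V)
    (b : Module.Basis (Option ℤ) ℂ V) (hbL : ∀ i : ℤ, b (some i) = L i) (hbC : b none = C)
    (hrel : VirRel L C)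
    (n : ℤ) (hn : n ≠ 0) (a : ℂ) (ha : a ≠ 0)
    (f : V →ₗ[ℂ] V) (hf : PhiTau L C n a f) :
    ∀ x y : V, f ⁅x, y⁆ = ⁅f x, f y⁆ := by
  obtain ⟨hL, hC⟩ := hf
  obtain ⟨hbr, hcen⟩ := hrel
  have hnC : (n : ℂ) ≠ 0 := Int.cast_ne_zero.mpr hn
  have hLC : ∀ i : ℤ, ⁅L i, C⁆ = 0 := fun i => by
    rw [← lie_skew, hcen i, neg_zero]
  have key : ∀ i j : Option ℤ, f ⁅b i, b j⁆ = ⁅f (b i), f (b j)⁆ := by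
    rintro (_|i) (_|j)
    · simp [hbC, lie_self]
    · by_cases hj : j = 0 <;>
        simp [hbC, hbL, hcen, hC, hL, lie_smul, lie_sub, lie_self, hj]
    · by_cases hi : i = 0 <;>
        simp [hbC, hbL, hLC, hC, hL, smul_lie, sub_lie, lie_self, hi]
    · rw [hbL, hbL, hbr i j, map_add, map_smul, map_smul, hL, hC, hL i, hL j]
      simp only [lie_sub, sub_lie, smul_lie, lie_smul, hcen, hLC, lie_self,
        smul_zero, zero_sub, sub_zero, neg_zero, sub_neg_eq_add, add_zero]
      rw [hbr (n*i) (n*j)]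
      by_cases h : i + j = 0
      · have hj : j = -i := by omega
        subst hj
        have h0 : i + -i = 0 := by ring
        have hm0 : n * i + n * -i = 0 := by ring
        have hai : a ^ i ≠ 0 := zpow_ne_zero _ ha
        simp only [h0, hm0, mul_zero, zpow_zero, if_pos rfl, reduceIte, zpow_neg]
        match_scalars <;> field_simp <;> ring
      · have h2 : ¬ (n * i + n * j = 0) := fun hc => h <| by
          rcases mul_eq_zero.mp (show n * (i + j) = 0 by linarith) with h' | h'
          · exact absurd h' hn
          · exact h'
        simp only [if_neg h, if_neg h2, zero_smul, add_zero, smul_zero, sub_zero]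
        rw [show n * i + n * j = n * (i + j) from by ring]
        match_scalars
        rw [zpow_add₀ ha]
        field_simp
  let B1 : V →ₗ[ℂ] V →ₗ[ℂ] V := LinearMap.mk₂ ℂ (fun x y => f ⁅x, y⁆)
    (fun x x' y => by simp [add_lie]) (fun c x y => by simp [smul_lie])
    (fun x y y' => by simp [lie_add]) (fun c x y => by simp [lie_smul])
  let B2 : V →ₗ[ℂ] V →ₗ[ℂ] V := LinearMap.mk₂ ℂ (fun x y => ⁅f x, f y⁆)
    (fun x x' y => by simp [add_lie]) (fun c x y => by simp [smul_lie])
    (fun x y y' => by simp [lie_add]) (fun c x y => by simp [lie_smul])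
  have hB : B1 = B2 := b.ext fun i => b.ext fun j => key i j
  intro x y
  exact LinearMap.congr_fun (LinearMap.congr_fun hB x) y
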